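/- Let l, n₁, n₂ with gcd(n₁,n₂) ≥ 3 satisfy l, n₁, n₂ ≥ 1 and gcd(l, n₁) = gcd(l, n₂) = 1, and set d = gcd(n₁, n₂). Then the set of points of 𝔑^l_{n₁,n₂} fixed by every element of the cyclic subgroup of order d generated by the unit quaternion cos(2π/d) + i·sin(2π/d) (acting via the left action of the unit quaternions) is homeomorphic, as a subspace of 𝔑^l_{n₁,n₂}, to the disjoint union of two copies of the orbit space of 𝕊³ under the action of the group μ_l of l-th roots of unity given by ξ·(z₁,z₂) = (ξ^{n₁}z₁, ξ^{n₂}z₂), i.e., to two disjoint copies of the lens space 𝕊³/ℤ_l. -/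

import Mathlib

noncomputable section

open Quaternion

/-- The embedding of `ℂ` into the quaternions, sending `a + b·i` to the quaternion `a + b·i`. -/
def cq (x : ℂ) : Quaternion ℝ := ⟨x.re, x.im, 0, 0⟩

lemma cq_mul (x y : ℂ) : cq (x * y) = cq x * cq y := by
  ext <;> simp only [Quaternion.re_mul, Quaternion.imI_mul, Quaternion.imJ_mul,
    Quaternion.imK_mul] <;> simp [cq, Complex.mul_re, Complex.mul_im]

lemma cq_one : cq 1 = 1 := by ext <;> simp [cq]

lemma cq_inj : Function.Injective cq := by
  intro x y h
  rw [Quaternion.ext_iff] at h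
  exact Complex.ext h.1 h.2.1

lemma norm_cq (x : ℂ) : ‖cq x‖ = ‖x‖ := by
  rw [← mul_self_inj (norm_nonneg _) (norm_nonneg _),
    ← Quaternion.normSq_eq_norm_mul_self, ← sq, ← Complex.normSq_eq_norm_sq, Quaternion.normSq_def']
  simp [cq, Complex.normSq_apply]
  ring

def qj : Quaternion ℝ := ⟨0, 0, 1, 0⟩

lemma qj_mul_cq (y : ℂ) : qj * cq y = cq (starRingEnd ℂ y) * qj := by
  ext <;> simp only [Quaternion.re_mul, Quaternion.imI_mul, Quaternion.imJ_mul,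
    Quaternion.imK_mul] <;> simp [cq, qj]

lemma quat_decomp (p : Quaternion ℝ) : p = cq ⟨p.re, p.imI⟩ + cq ⟨p.imJ, p.imK⟩ * qj := by
  ext <;> simp only [Quaternion.re_add, Quaternion.imI_add, Quaternion.imJ_add, Quaternion.imK_add, Quaternion.re_mul, Quaternion.imI_mul, Quaternion.imJ_mul,
    Quaternion.imK_mul] <;> simp [cq, qj]

lemma comp_eq {α β α' β' : ℂ} (h : cq α + cq β * qj = cq α' + cq β' * qj) : α = α' ∧ β = β' := by
  rw [Quaternion.ext_iff] at h
  simp only [Quaternion.re_add, Quaternion.imI_add, Quaternion.imJ_add, Quaternion.imK_add, Quaternion.re_mul, Quaternion.imI_mul, Quaternion.imJ_mul,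
    Quaternion.imK_mul] at h
  simp [cq, qj] at h
  exact ⟨Complex.ext h.1 h.2.1, Complex.ext h.2.2.1 h.2.2.2⟩

lemma cq_mul_decomp (c α β y : ℂ) :
    cq c * (cq α + cq β * qj) * cq y = cq (c * α * y) + cq (c * β * starRingEnd ℂ y) * qj := by
  ext <;> simp only [Quaternion.re_add, Quaternion.imI_add, Quaternion.imJ_add, Quaternion.imK_add, Quaternion.re_mul, Quaternion.imI_mul, Quaternion.imJ_mul,
    Quaternion.imK_mul] <;>
    simp [cq, qj, Complex.mul_re, Complex.mul_im] <;> ring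

/-- The total space `𝕊³_ℍ × 𝕊³`: pairs of a unit quaternion and a point `(z,w) ∈ ℂ²`
with `|z|² + |w|² = 1`. -/
abbrev TotalSpace : Type :=
  {a : Quaternion ℝ × (ℂ × ℂ) // ‖a.1‖ = 1 ∧ Complex.normSq a.2.1 + Complex.normSq a.2.2 = 1}

/-- The circle action `x · (p,(z,w)) = (p x^l, (x^m z, x^n w))` on the ambient space. -/
def circleAct (l m n : ℕ) (x : Circle) (a : Quaternion ℝ × (ℂ × ℂ)) :
    Quaternion ℝ × (ℂ × ℂ) :=
  (a.1 * cq ((x : ℂ) ^ l), ((x : ℂ) ^ m * a.2.1, (x : ℂ) ^ n * a.2.2))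

/-- The orbit relation of the circle action on `𝕊³_ℍ × 𝕊³`. -/
def NRel (l m n : ℕ) (a b : TotalSpace) : Prop :=
  ∃ x : Circle, circleAct l m n x a.1 = b.1

/-- The orbit space `𝔑^l_{m,n}`, with the quotient topology. -/
abbrev NSpace (l m n : ℕ) : Type := Quot (NRel l m n)

lemma circleAct_one (l m n : ℕ) (a : Quaternion ℝ × (ℂ × ℂ)) :
    circleAct l m n 1 a = a := by
  simp [circleAct, cq_one]

lemma circleAct_mul (l m n : ℕ) (x y : Circle) (a : Quaternion ℝ × (ℂ × ℂ)) :
    circleAct l m n (x * y) a = circleAct l m n x (circleAct l m n y a) := by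
  simp only [circleAct, Circle.coe_mul, mul_pow, cq_mul, Prod.mk.injEq]
  refine ⟨by rw [mul_assoc, ← cq_mul, ← cq_mul, mul_comm ((x:ℂ)^l)], by ring, by ring⟩

lemma nrel_equivalence (l m n : ℕ) : Equivalence (NRel l m n) := by
  constructor
  · exact fun a => ⟨1, by rw [circleAct_one]⟩
  · rintro a b ⟨x, hx⟩
    exact ⟨x⁻¹, by rw [← hx, ← circleAct_mul, inv_mul_cancel, circleAct_one]⟩
  · rintro a b c ⟨x, hx⟩ ⟨y, hy⟩
    exact ⟨y * x, by rw [circleAct_mul, hx, hy]⟩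

lemma nspace_mk_eq_mk {l m n : ℕ} {a b : TotalSpace} :
    (Quot.mk (NRel l m n) a = Quot.mk (NRel l m n) b) ↔ NRel l m n a b :=
  ⟨fun h => (nrel_equivalence l m n).eqvGen_iff.mp (Quot.eqvGen_exact h), Quot.sound⟩

/-- The action preserves the total space. -/
lemma circleAct_mem (l m n : ℕ) (x : Circle) (a : TotalSpace) :
    ‖(circleAct l m n x a.1).1‖ = 1 ∧
      Complex.normSq (circleAct l m n x a.1).2.1 +
        Complex.normSq (circleAct l m n x a.1).2.2 = 1 := by
  obtain ⟨⟨p, z, w⟩, hp, hzw⟩ := a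
  refine ⟨?_, ?_⟩
  · simp only [circleAct, norm_mul, hp, one_mul, norm_cq, norm_pow, Circle.norm_coe, one_pow]
  · simp only [circleAct, map_mul, map_pow, Circle.normSq_coe, one_pow, one_mul]
    exact hzw

lemma dist_circleAct (l m n : ℕ) (x : Circle) (a b : Quaternion ℝ × (ℂ × ℂ)) :
    dist (circleAct l m n x a) (circleAct l m n x b) = dist a b := by
  simp only [circleAct, Prod.dist_eq]
  congr 1
  · rw [dist_eq_norm, dist_eq_norm, ← sub_mul, norm_mul, norm_cq, norm_pow, Circle.norm_coe,
      one_pow, mul_one]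
  congr 1 <;>
  · rw [dist_eq_norm, dist_eq_norm, ← mul_sub, norm_mul, norm_pow,
      Circle.norm_coe, one_pow, one_mul]

def qi : Quaternion ℝ := ⟨0, 1, 0, 0⟩

lemma continuous_cq : Continuous cq := by
  have h : cq = fun x : ℂ => x.re • (1 : Quaternion ℝ) + x.im • qi := by
    funext x
    ext <;> simp only [Quaternion.re_add, Quaternion.imI_add, Quaternion.imJ_add, Quaternion.imK_add, Quaternion.re_smul, Quaternion.imI_smul, Quaternion.imJ_smul, Quaternion.imK_smul] <;> simp [cq, qi]
  rw [h]
  exact (Complex.continuous_re.smul continuous_const).add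
    (Complex.continuous_im.smul continuous_const)

def act' (l m n : ℕ) (x : Circle) (a : TotalSpace) : TotalSpace :=
  ⟨circleAct l m n x a.1, circleAct_mem l m n x a⟩

lemma act'_one (l m n : ℕ) (a : TotalSpace) : act' l m n 1 a = a :=
  Subtype.ext (circleAct_one l m n a.1)

lemma act'_mul (l m n : ℕ) (x y : Circle) (a : TotalSpace) :
    act' l m n (x * y) a = act' l m n x (act' l m n y a) :=
  Subtype.ext (circleAct_mul l m n x y a.1)

lemma nrel_iff (l m n : ℕ) (a b : TotalSpace) :
    NRel l m n a b ↔ ∃ x : Circle, act' l m n x a = b := by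
  constructor
  · rintro ⟨x, hx⟩; exact ⟨x, Subtype.ext hx⟩
  · rintro ⟨x, hx⟩; exact ⟨x, congrArg Subtype.val hx⟩

lemma isometry_act' (l m n : ℕ) (x : Circle) : Isometry (act' l m n x) :=
  Isometry.of_dist_eq fun a b => by
    rw [Subtype.dist_eq, Subtype.dist_eq]
    exact dist_circleAct l m n x a.1 b.1

lemma continuous_act'_x (l m n : ℕ) (a : TotalSpace) :
    Continuous fun x : Circle => act' l m n x a := by
  apply Continuous.subtype_mk
  unfold circleAct
  refine Continuous.prodMk ?_ (Continuous.prodMk ?_ ?_)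
  · exact continuous_const.mul (continuous_cq.comp ((continuous_subtype_val).pow l))
  · exact ((continuous_subtype_val).pow m).mul continuous_const
  · exact ((continuous_subtype_val).pow n).mul continuous_const

/-- The orbit of a point. -/
def orb (l m n : ℕ) (a : TotalSpace) : Set TotalSpace :=
  Set.range fun x : Circle => act' l m n x a

lemma mem_orb_iff (l m n : ℕ) (a b : TotalSpace) : b ∈ orb l m n a ↔ NRel l m n a b := by
  rw [nrel_iff]; exact ⟨fun ⟨x, h⟩ => ⟨x, h⟩, fun ⟨x, h⟩ => ⟨x, h⟩⟩

lemma isCompact_orb (l m n : ℕ) (a : TotalSpace) : IsCompact (orb l m n a) :=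
  isCompact_range (continuous_act'_x l m n a)

lemma image_act'_orb (l m n : ℕ) (x : Circle) (a : TotalSpace) :
    act' l m n x '' orb l m n a = orb l m n a := by
  ext t
  constructor
  · rintro ⟨s, ⟨y, rfl⟩, rfl⟩
    exact ⟨x * y, act'_mul l m n x y a⟩
  · rintro ⟨y, rfl⟩
    refine ⟨act' l m n (x⁻¹ * y) a, ⟨x⁻¹ * y, rfl⟩, ?_⟩
    rw [← act'_mul, mul_inv_cancel_left]

lemma infDist_act' (l m n : ℕ) (x : Circle) (a t : TotalSpace) :
    Metric.infDist (act' l m n x t) (orb l m n a) = Metric.infDist t (orb l m n a) := by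
  conv_lhs => rw [← image_act'_orb l m n x a]
  exact Metric.infDist_image (isometry_act' l m n x)

instance nspace_t2 (l m n : ℕ) : T2Space (NSpace l m n) := by
  constructor
  intro X Y
  induction X using Quot.ind with | _ a =>
  induction Y using Quot.ind with | _ b =>
  intro hXY
  have hab : ¬ NRel l m n a b := fun h => hXY (Quot.sound h)
  have hrefl := (nrel_equivalence l m n).refl
  have hOane : (orb l m n a).Nonempty := ⟨a, (mem_orb_iff l m n a a).mpr (hrefl a)⟩
  have hObne : (orb l m n b).Nonempty := ⟨b, (mem_orb_iff l m n b b).mpr (hrefl b)⟩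
  have hUopen : IsOpen {t : TotalSpace |
      Metric.infDist t (orb l m n a) < Metric.infDist t (orb l m n b)} :=
    isOpen_lt (Metric.continuous_infDist_pt _) (Metric.continuous_infDist_pt _)
  have hVopen : IsOpen {t : TotalSpace |
      Metric.infDist t (orb l m n b) < Metric.infDist t (orb l m n a)} :=
    isOpen_lt (Metric.continuous_infDist_pt _) (Metric.continuous_infDist_pt _)
  set U : Set TotalSpace :=
    {t | Metric.infDist t (orb l m n a) < Metric.infDist t (orb l m n b)} with hU
  set V : Set TotalSpace :=
    {t | Metric.infDist t (orb l m n b) < Metric.infDist t (orb l m n a)} with hV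
  have hsatU : ∀ (x : Circle) (t : TotalSpace), t ∈ U → act' l m n x t ∈ U := by
    intro x t ht
    rw [hU, Set.mem_setOf_eq, infDist_act', infDist_act']
    exact ht
  have hsatV : ∀ (x : Circle) (t : TotalSpace), t ∈ V → act' l m n x t ∈ V := by
    intro x t ht
    rw [hV, Set.mem_setOf_eq, infDist_act', infDist_act']
    exact ht
  have haU : a ∈ U := by
    rw [hU, Set.mem_setOf_eq,
      Metric.infDist_zero_of_mem ((mem_orb_iff l m n a a).mpr (hrefl a))]
    refine ((isCompact_orb l m n b).isClosed.notMem_iff_infDist_pos hObne).mp ?_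
    intro hmem
    exact hab ((nrel_equivalence l m n).symm ((mem_orb_iff l m n b a).mp hmem))
  have hbV : b ∈ V := by
    rw [hV, Set.mem_setOf_eq,
      Metric.infDist_zero_of_mem ((mem_orb_iff l m n b b).mpr (hrefl b))]
    refine ((isCompact_orb l m n a).isClosed.notMem_iff_infDist_pos hOane).mp ?_
    intro hmem
    exact hab ((mem_orb_iff l m n a b).mp hmem)
  refine ⟨Quot.mk _ '' U, Quot.mk _ '' V, ?_, ?_, ⟨a, haU, rfl⟩, ⟨b, hbV, rfl⟩, ?_⟩
  · rw [isOpen_coinduced (f := Quot.mk (NRel l m n))]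
    have hpre : Quot.mk (NRel l m n) ⁻¹' (Quot.mk _ '' U) = U := by
      ext t
      simp only [Set.mem_preimage, Set.mem_image]
      constructor
      · rintro ⟨u, hu, hut⟩
        obtain ⟨x, hx⟩ := (nrel_iff l m n u t).mp (nspace_mk_eq_mk.mp hut)
        exact hx ▸ hsatU x u hu
      · exact fun ht => ⟨t, ht, rfl⟩
    rw [hpre]; exact hUopen
  · rw [isOpen_coinduced (f := Quot.mk (NRel l m n))]
    have hpre : Quot.mk (NRel l m n) ⁻¹' (Quot.mk _ '' V) = V := by
      ext t
      simp only [Set.mem_preimage, Set.mem_image]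
      constructor
      · rintro ⟨u, hu, hut⟩
        obtain ⟨x, hx⟩ := (nrel_iff l m n u t).mp (nspace_mk_eq_mk.mp hut)
        exact hx ▸ hsatV x u hu
      · exact fun ht => ⟨t, ht, rfl⟩
    rw [hpre]; exact hVopen
  · rw [Set.disjoint_left]
    rintro _ ⟨u, hu, rfl⟩ ⟨v, hv, huv⟩
    obtain ⟨x, hx⟩ := (nrel_iff l m n v u).mp (nspace_mk_eq_mk.mp huv)
    have huV : u ∈ V := hx ▸ hsatV x v hv
    rw [hU, Set.mem_setOf_eq] at hu
    rw [hV, Set.mem_setOf_eq] at huV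
    exact absurd hu (not_lt.mpr (le_of_lt huV))


/-- The left action of the group of unit quaternions on `𝔑^l_{m,n}`,
`g·[(p,(z,w))] = [(gp,(z,w))]`. -/
def quatAct (l m n : ℕ) (g : Metric.sphere (0 : Quaternion ℝ) 1) :
    NSpace l m n → NSpace l m n :=
  Quot.lift
    (fun a => Quot.mk _ ⟨((g : Quaternion ℝ) * a.1.1, a.1.2), by
      refine ⟨?_, a.2.2⟩
      have hg : ‖(g : Quaternion ℝ)‖ = 1 := mem_sphere_zero_iff_norm.mp g.2
      rw [norm_mul, hg, a.2.1, mul_one]⟩)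
    (by
      rintro ⟨⟨p, z, w⟩, hp, hzw⟩ ⟨⟨p', z', w'⟩, hp', hzw'⟩ ⟨x, hx⟩
      apply Quot.sound
      refine ⟨x, ?_⟩
      simp only [circleAct, Prod.mk.injEq] at hx ⊢
      exact ⟨by rw [mul_assoc, hx.1], hx.2⟩)

lemma quatAct_mul (l m n : ℕ) (g h : Metric.sphere (0 : Quaternion ℝ) 1) (X : NSpace l m n) :
    quatAct l m n (g * h) X = quatAct l m n g (quatAct l m n h X) := by
  induction X using Quot.ind with | _ a =>
  show Quot.mk _ _ = Quot.mk _ _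
  apply congrArg
  apply Subtype.ext
  show (((g * h : Metric.sphere (0 : Quaternion ℝ) 1) : Quaternion ℝ) * a.1.1, a.1.2)
      = ((g : Quaternion ℝ) * ((h : Quaternion ℝ) * a.1.1), a.1.2)
  rw [Metric.unitSphere.coe_mul, mul_assoc]

lemma quatAct_one (l m n : ℕ) (X : NSpace l m n) : quatAct l m n 1 X = X := by
  induction X using Quot.ind with | _ a =>
  show Quot.mk _ _ = Quot.mk _ _
  apply congrArg
  apply Subtype.ext
  show (((1 : Metric.sphere (0 : Quaternion ℝ) 1) : Quaternion ℝ) * a.1.1, a.1.2) = a.1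
  rw [Metric.unitSphere.coe_one, one_mul]

lemma fixed_of_gen {l m n : ℕ} {ζ : Metric.sphere (0 : Quaternion ℝ) 1} {X : NSpace l m n}
    (h1 : quatAct l m n ζ X = X) : ∀ g ∈ Subgroup.zpowers ζ, quatAct l m n g X = X := by
  have key : Subgroup.zpowers ζ ≤
      { carrier := {g | quatAct l m n g X = X}
        one_mem' := quatAct_one l m n X
        mul_mem' := by
          intro g h hg hh
          simp only [Set.mem_setOf_eq] at *
          rw [quatAct_mul, hh, hg]
        inv_mem' := by
          intro g hg
          simp only [Set.mem_setOf_eq] at *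
          conv_lhs => rw [← hg]
          rw [← quatAct_mul, inv_mul_cancel, quatAct_one] } :=
    Subgroup.zpowers_le.mpr h1
  exact fun g hg => key hg

lemma exists_circle_root (l : ℕ) (hl : 0 < l) (α : ℂ) (hα : ‖α‖ = 1) :
    ∃ x : Circle, (x : ℂ) ^ l = α := by
  obtain ⟨z, hz⟩ := IsAlgClosed.exists_pow_nat_eq α hl
  have hz1 : ‖z‖ = 1 := by
    have h : ‖z‖ ^ l = 1 := by rw [← norm_pow, hz, hα]
    rcases lt_trichotomy (‖z‖) 1 with hlt | heq | hgt
    · nlinarith [pow_lt_one₀ (norm_nonneg z) hlt hl.ne']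
    · exact heq
    · nlinarith [one_lt_pow₀ hgt hl.ne']
  refine ⟨⟨z, ?_⟩, hz⟩
  show z ∈ Metric.sphere (0 : ℂ) 1
  rw [mem_sphere_zero_iff_norm, hz1]


/-- The unit sphere `𝕊³ ⊂ ℂ²`: pairs `(z₁,z₂)` with `|z₁|² + |z₂|² = 1`. -/
abbrev SphereC2 : Type :=
  {zw : ℂ × ℂ // Complex.normSq zw.1 + Complex.normSq zw.2 = 1}

/-- The orbit relation of the action of the group `μ_l` of `l`-th roots of unity on `𝕊³`,
`ξ·(z₁,z₂) = (ξ^{n₁}z₁, ξ^{n₂}z₂)`; its quotient is the lens space `𝕊³/ℤ_l`. -/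
def lensRel (l n₁ n₂ : ℕ) (a b : SphereC2) : Prop :=
  ∃ ξ : ℂ, ξ ^ l = 1 ∧ (ξ ^ n₁ * a.1.1, ξ ^ n₂ * a.1.2) = b.1

/-- The lens space `𝕊³/ℤ_l` (with weights `n₁, n₂`), with the quotient topology. -/
abbrev LensSpace (l n₁ n₂ : ℕ) : Type := Quot (lensRel l n₁ n₂)

instance sphereC2_compact : CompactSpace SphereC2 := by
  apply isCompact_iff_compactSpace.mp
  apply Metric.isCompact_of_isClosed_isBounded
  · exact isClosed_eq ((Complex.continuous_normSq.comp continuous_fst).add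
      (Complex.continuous_normSq.comp continuous_snd)) continuous_const
  · apply (Metric.isBounded_closedBall (x := (0 : ℂ × ℂ)) (r := 1)).subset
    rintro ⟨z, w⟩ h
    replace h : Complex.normSq z + Complex.normSq w = 1 := h
    have h1 : Complex.normSq z ≤ 1 := by nlinarith [Complex.normSq_nonneg w]
    have h2 : Complex.normSq w ≤ 1 := by nlinarith [Complex.normSq_nonneg z]
    rw [Metric.mem_closedBall, dist_zero_right, Prod.norm_def]
    have hz : ‖z‖ ≤ 1 := by
      nlinarith [Complex.sq_norm z, norm_nonneg z]
    have hw : ‖w‖ ≤ 1 := by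
      nlinarith [Complex.sq_norm w, norm_nonneg w]
    exact max_le hz hw

lemma norm_qj : ‖qj‖ = 1 := by
  have h : normSq qj = 1 := by
    rw [Quaternion.normSq_def']; simp [qj]
  rw [← mul_self_inj (norm_nonneg _) zero_le_one, ← Quaternion.normSq_eq_norm_mul_self, h,
    one_mul]

lemma cq_zero : cq 0 = 0 := by ext <;> simp [cq]

/-- The point `(1,(z,w))` of the total space. -/
def t₁ (a : SphereC2) : TotalSpace := ⟨(1, a.1), by simp [a.2]⟩

/-- The point `(j,(z,w))` of the total space. -/
def tj (a : SphereC2) : TotalSpace := ⟨(qj, a.1), by simp [norm_qj, a.2]⟩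

lemma abs_eq_one_of_pow {l : ℕ} (hl : 0 < l) {ξ : ℂ} (h : ξ ^ l = 1) : ‖ξ‖ = 1 := by
  have h' : ‖ξ‖ ^ l = 1 := by rw [← norm_pow, h, norm_one]
  rcases lt_trichotomy (‖ξ‖) 1 with hlt | heq | hgt
  · nlinarith [pow_lt_one₀ (norm_nonneg ξ) hlt hl.ne']
  · exact heq
  · nlinarith [one_lt_pow₀ hgt hl.ne']

/-- A unit complex number as an element of `Circle`. -/
def toC (ξ : ℂ) (h : ‖ξ‖ = 1) : Circle :=
  ⟨ξ, by
    show ξ ∈ Metric.sphere (0 : ℂ) 1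
    rw [mem_sphere_zero_iff_norm, h]⟩

lemma circle_coe_pow (x : Circle) (n : ℕ) : ((x ^ n : Circle) : ℂ) = (x : ℂ) ^ n :=
  map_pow Circle.coeHom x n

lemma wd₁ (l n₁ n₂ : ℕ) (hl : 0 < l) (a b : SphereC2) (h : lensRel l n₁ n₂ a b) :
    Quot.mk (NRel l n₁ n₂) (t₁ a) = Quot.mk (NRel l n₁ n₂) (t₁ b) := by
  obtain ⟨ξ, hξl, hξab⟩ := h
  apply Quot.sound
  refine ⟨toC ξ (abs_eq_one_of_pow hl hξl), ?_⟩
  show ((1 : Quaternion ℝ) * cq (ξ ^ l), (ξ ^ n₁ * a.1.1, ξ ^ n₂ * a.1.2)) = ((1 : Quaternion ℝ), b.1)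
  rw [hξl, cq_one, one_mul, hξab]

lemma wdj (l n₁ n₂ : ℕ) (hl : 0 < l) (a b : SphereC2) (h : lensRel l n₁ n₂ a b) :
    Quot.mk (NRel l n₁ n₂) (tj a) = Quot.mk (NRel l n₁ n₂) (tj b) := by
  obtain ⟨ξ, hξl, hξab⟩ := h
  apply Quot.sound
  refine ⟨toC ξ (abs_eq_one_of_pow hl hξl), ?_⟩
  show (qj * cq (ξ ^ l), (ξ ^ n₁ * a.1.1, ξ ^ n₂ * a.1.2)) = (qj, b.1)
  rw [hξl, cq_one, mul_one, hξab]

/-- The candidate map `Lens ⊕ Lens → 𝔑`. -/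
def Φ (l n₁ n₂ : ℕ) (hl : 0 < l) : LensSpace l n₁ n₂ ⊕ LensSpace l n₁ n₂ → NSpace l n₁ n₂ :=
  Sum.elim (Quot.lift (fun a => Quot.mk _ (t₁ a)) (wd₁ l n₁ n₂ hl))
    (Quot.lift (fun a => Quot.mk _ (tj a)) (wdj l n₁ n₂ hl))

lemma continuous_Φ (l n₁ n₂ : ℕ) (hl : 0 < l) : Continuous (Φ l n₁ n₂ hl) := by
  apply Continuous.sumElim <;>
  · apply continuous_quot_lift
    exact continuous_quot_mk.comp
      (Continuous.subtype_mk (continuous_const.prodMk continuous_subtype_val) _)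

lemma injective_Φ (l n₁ n₂ : ℕ) (hl : 0 < l) : Function.Injective (Φ l n₁ n₂ hl) := by
  rintro (X | X) (Y | Y) h <;>
    induction X using Quot.ind with | _ a => ?_ <;>
    induction Y using Quot.ind with | _ b => ?_
  · obtain ⟨x, hx⟩ := nspace_mk_eq_mk.mp h
    have h1 := congrArg Prod.fst hx
    have h2 := congrArg Prod.snd hx
    simp only [circleAct, t₁] at h1 h2
    rw [one_mul] at h1
    have hxl : (x : ℂ) ^ l = 1 := cq_inj (by rw [h1, cq_one])
    exact congrArg Sum.inl (Quot.sound ⟨x, hxl, h2⟩)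
  · obtain ⟨x, hx⟩ := nspace_mk_eq_mk.mp h
    have h1 := congrArg Prod.fst hx
    simp only [circleAct, t₁, tj] at h1
    rw [one_mul] at h1
    have hcmp : cq ((x : ℂ) ^ l) + cq 0 * qj = cq 0 + cq 1 * qj := by
      rw [cq_zero, zero_mul, add_zero, zero_add, cq_one, one_mul, h1]
    exact absurd (comp_eq hcmp).2 one_ne_zero.symm
  · obtain ⟨x, hx⟩ := nspace_mk_eq_mk.mp h
    have h1 := congrArg Prod.fst hx
    simp only [circleAct, t₁, tj] at h1
    rw [qj_mul_cq] at h1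
    have hcmp : cq 0 + cq (starRingEnd ℂ ((x : ℂ) ^ l)) * qj = cq 1 + cq 0 * qj := by
      rw [cq_zero, zero_mul, add_zero, zero_add, cq_one, h1]
    have h0 : starRingEnd ℂ ((x : ℂ) ^ l) = 0 := (comp_eq hcmp).2.symm ▸ (comp_eq hcmp).2
    have habs : ‖(x : ℂ) ^ l‖ = 1 := by simp [map_pow, Circle.norm_coe]
    rw [← Complex.norm_conj, h0, norm_zero] at habs
    exact absurd habs (by norm_num)
  · obtain ⟨x, hx⟩ := nspace_mk_eq_mk.mp h
    have h1 := congrArg Prod.fst hx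
    have h2 := congrArg Prod.snd hx
    simp only [circleAct, tj] at h1 h2
    rw [qj_mul_cq] at h1
    have hcmp : cq 0 + cq (starRingEnd ℂ ((x : ℂ) ^ l)) * qj = cq 0 + cq 1 * qj := by
      rw [cq_one, one_mul, h1]
    have hconj : starRingEnd ℂ ((x : ℂ) ^ l) = 1 := (comp_eq hcmp).2
    have hxl : (x : ℂ) ^ l = 1 := by
      have hh := congrArg (starRingEnd ℂ) hconj
      simpa using hh
    exact congrArg Sum.inr (Quot.sound ⟨x, hxl, h2⟩)

lemma quatAct_mk (l m n : ℕ) (g : Metric.sphere (0 : Quaternion ℝ) 1) (a : TotalSpace) :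
    quatAct l m n g (Quot.mk _ a) = Quot.mk _ (⟨((g : Quaternion ℝ) * a.1.1, a.1.2), by
      refine ⟨?_, a.2.2⟩
      have hg : ‖(g : Quaternion ℝ)‖ = 1 := mem_sphere_zero_iff_norm.mp g.2
      rw [norm_mul, hg, a.2.1, mul_one]⟩ : TotalSpace) := rfl

/-- **The fixed point set of the principal isotropy group is two lens spaces.**
Let `l, n₁, n₂` be positive integers with `gcd(l,n₁) = gcd(l,n₂) = 1` and
`d = gcd(n₁,n₂) ≥ 3`, and let `ζ = cos(2π/d) + i·sin(2π/d)`, a unit quaternion.  Then the set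
of points of `𝔑^l_{n₁,n₂}` fixed by every element of the cyclic subgroup of order `d`
generated by `ζ` (acting via the left action of the unit quaternions) is homeomorphic to the
disjoint union of two copies of the lens space `𝕊³/ℤ_l`, the orbit space of `𝕊³` under the
action `ξ·(z₁,z₂) = (ξ^{n₁}z₁, ξ^{n₂}z₂)` of the `l`-th roots of unity. -/
theorem fixedSet_homeomorph_two_lensSpaces (l n₁ n₂ : ℕ)
    (hl : 0 < l) (hn₁ : 0 < n₁) (hn₂ : 0 < n₂)
    (hln₁ : Nat.gcd l n₁ = 1) (hln₂ : Nat.gcd l n₂ = 1)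
    (d : ℕ) (hd : d = Nat.gcd n₁ n₂) (hd3 : 3 ≤ d)
    (ζ : Metric.sphere (0 : Quaternion ℝ) 1)
    (hζ : (ζ : Quaternion ℝ) = cq ⟨Real.cos (2 * Real.pi / d), Real.sin (2 * Real.pi / d)⟩) :
    Nonempty
      (↥{X : NSpace l n₁ n₂ | ∀ g ∈ Subgroup.zpowers ζ, quatAct l n₁ n₂ g X = X} ≃ₜ
        (LensSpace l n₁ n₂ ⊕ LensSpace l n₁ n₂)) := by
  classical
  have hd1 : 1 < d := by omega
  have hd0 : (0:ℝ) < d := by exact_mod_cast Nat.lt_of_lt_of_le (by norm_num) hd3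
  have hdn₁ : d ∣ n₁ := hd ▸ Nat.gcd_dvd_left n₁ n₂
  have hdn₂ : d ∣ n₂ := hd ▸ Nat.gcd_dvd_right n₁ n₂
  have hcop : Nat.Coprime l d := Nat.Coprime.coprime_dvd_right hdn₁ hln₁
  set c : ℂ := ⟨Real.cos (2 * Real.pi / d), Real.sin (2 * Real.pi / d)⟩ with hcdef
  have hsin : c.im ≠ 0 := by
    show Real.sin (2 * Real.pi / d) ≠ 0
    apply ne_of_gt
    apply Real.sin_pos_of_pos_of_lt_pi
    · positivity
    · rw [div_lt_iff₀ hd0]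
      have h3 : (3:ℝ) ≤ d := by exact_mod_cast hd3
      nlinarith [Real.pi_pos]
  set u : Circle := Circle.exp (2 * Real.pi / d) with hudef
  have hcu : (u : ℂ) = c := by
    rw [hudef, Circle.coe_exp, hcdef]
    apply Complex.ext
    · rw [Complex.exp_ofReal_mul_I_re]
    · rw [Complex.exp_ofReal_mul_I_im]
  have hud : u ^ d = 1 := by
    apply Circle.coe_injective
    rw [circle_coe_pow, Circle.coe_exp, ← Complex.exp_nat_mul, Circle.coe_one]
    have harg : (d:ℂ) * ((2 * Real.pi / d : ℝ) * Complex.I) = 2 * Real.pi * Complex.I := by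
      have hdne : (d:ℂ) ≠ 0 := by
        exact_mod_cast ne_of_gt (show (0:ℝ) < d from hd0)
      push_cast
      field_simp
    rw [harg, Complex.exp_two_pi_mul_I]
  obtain ⟨l', -, hl'⟩ := Nat.exists_mul_mod_eq_one_of_coprime hcop hd1
  obtain ⟨x₀, hx₀l, hx₀n₁, hx₀n₂⟩ :
      ∃ x : Circle, x ^ l = u⁻¹ ∧ x ^ n₁ = 1 ∧ x ^ n₂ = 1 := by
    have hupow : ∀ k : ℕ, d ∣ k → u ^ k = 1 := by
      rintro k ⟨t, rfl⟩
      rw [pow_mul, hud, one_pow]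
    refine ⟨u⁻¹ ^ l', ?_, ?_, ?_⟩
    · rw [← pow_mul, inv_pow]
      have hmod : l' * l = d * (l' * l / d) + 1 := by
        have h1 := Nat.div_add_mod (l' * l) d
        have h2 : l' * l % d = 1 := by rw [mul_comm l' l, hl']
        omega
      rw [hmod, pow_add, pow_mul, hud, one_pow, one_mul, pow_one]
    · rw [← pow_mul, inv_pow, mul_comm l' n₁, pow_mul, hupow n₁ hdn₁, one_pow, inv_one]
    · rw [← pow_mul, inv_pow, mul_comm l' n₂, pow_mul, hupow n₂ hdn₂, one_pow, inv_one]
  have hx₀lc : (x₀ : ℂ) ^ l = (u : ℂ)⁻¹ := by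
    rw [← circle_coe_pow, hx₀l, Circle.coe_inv]
  have hx₀n₁c : (x₀ : ℂ) ^ n₁ = 1 := by rw [← circle_coe_pow, hx₀n₁, Circle.coe_one]
  have hx₀n₂c : (x₀ : ℂ) ^ n₂ = 1 := by rw [← circle_coe_pow, hx₀n₂, Circle.coe_one]
  have hx₀ilc : ((x₀⁻¹ : Circle) : ℂ) ^ l = (u : ℂ) := by
    rw [← circle_coe_pow, inv_pow, hx₀l, inv_inv]
  have hx₀in₁c : ((x₀⁻¹ : Circle) : ℂ) ^ n₁ = 1 := by
    rw [← circle_coe_pow, inv_pow, hx₀n₁, inv_one, Circle.coe_one]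
  have hx₀in₂c : ((x₀⁻¹ : Circle) : ℂ) ^ n₂ = 1 := by
    rw [← circle_coe_pow, inv_pow, hx₀n₂, inv_one, Circle.coe_one]
  -- membership of the image in the fixed-point set
  have hmem : ∀ v, Φ l n₁ n₂ hl v ∈
      {X : NSpace l n₁ n₂ | ∀ g ∈ Subgroup.zpowers ζ, quatAct l n₁ n₂ g X = X} := by
    rintro (V | V) <;> induction V using Quot.ind with | _ a => ?_
    · apply fixed_of_gen
      rw [show Φ l n₁ n₂ hl (Sum.inl (Quot.mk _ a)) = Quot.mk _ (t₁ a) from rfl, quatAct_mk]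
      refine Quot.sound ⟨x₀, ?_⟩
      show ((ζ : Quaternion ℝ) * (1 : Quaternion ℝ) * cq ((x₀ : ℂ) ^ l),
          ((x₀ : ℂ) ^ n₁ * a.1.1, (x₀ : ℂ) ^ n₂ * a.1.2)) = ((1 : Quaternion ℝ), a.1)
      rw [hx₀n₁c, hx₀n₂c, one_mul, one_mul, mul_one, hζ, hx₀lc, ← cq_mul, ← hcu,
        mul_inv_cancel₀ (Circle.coe_ne_zero u), cq_one]
    · apply fixed_of_gen
      rw [show Φ l n₁ n₂ hl (Sum.inr (Quot.mk _ a)) = Quot.mk _ (tj a) from rfl, quatAct_mk]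
      refine Quot.sound ⟨x₀⁻¹, ?_⟩
      show ((ζ : Quaternion ℝ) * qj * cq (((x₀⁻¹ : Circle) : ℂ) ^ l),
          (((x₀⁻¹ : Circle) : ℂ) ^ n₁ * a.1.1, ((x₀⁻¹ : Circle) : ℂ) ^ n₂ * a.1.2)) = (qj, a.1)
      rw [hx₀in₁c, hx₀in₂c, one_mul, one_mul, hζ, hx₀ilc, mul_assoc, qj_mul_cq,
        ← mul_assoc, ← cq_mul, ← Circle.coe_inv_eq_conj, ← hcu, ← Circle.coe_mul,
        mul_inv_cancel, Circle.coe_one, cq_one, one_mul]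
  -- surjectivity onto the fixed-point set
  have hsurj : ∀ a : TotalSpace,
      (∀ g ∈ Subgroup.zpowers ζ, quatAct l n₁ n₂ g (Quot.mk _ a) = Quot.mk _ a) →
      ∃ v, Φ l n₁ n₂ hl v = Quot.mk _ a := by
    intro a hX
    have hfix := hX ζ (Subgroup.mem_zpowers ζ)
    rw [quatAct_mk] at hfix
    obtain ⟨x, hx⟩ := nspace_mk_eq_mk.mp hfix
    have hx1 := congrArg Prod.fst hx
    simp only [circleAct] at hx1
    set y : ℂ := (x : ℂ) ^ l with hydef
    have hyabs : ‖y‖ = 1 := by rw [hydef]; simp [map_pow, Circle.norm_coe]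
    set p : Quaternion ℝ := a.1.1 with hpdef
    set α : ℂ := ⟨p.re, p.imI⟩ with hαdef
    set β : ℂ := ⟨p.imJ, p.imK⟩ with hβdef
    have hdec : p = cq α + cq β * qj := quat_decomp p
    rw [hζ] at hx1
    rw [hdec, cq_mul_decomp] at hx1
    obtain ⟨h₁, h₂⟩ := comp_eq hx1
    by_cases hβ0 : β = 0
    · -- p lies on the complex circle
      have hpα : p = cq α := by rw [hdec, hβ0, cq_zero, zero_mul, add_zero]
      have hα1 : ‖α‖ = 1 := by rw [← norm_cq, ← hpα, hpdef, a.2.1]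
      obtain ⟨x', hx'⟩ := exists_circle_root l hl (starRingEnd ℂ α)
        (by rw [Complex.norm_conj, hα1])
      refine ⟨Sum.inl (Quot.mk _ ⟨((x' : ℂ) ^ n₁ * a.1.2.1, (x' : ℂ) ^ n₂ * a.1.2.2), ?_⟩), ?_⟩
      · simp only [map_mul, map_pow, Circle.normSq_coe, one_pow, one_mul]
        exact a.2.2
      · rw [show ∀ h, Φ l n₁ n₂ hl (Sum.inl (Quot.mk _ ⟨((x' : ℂ) ^ n₁ * a.1.2.1,
          (x' : ℂ) ^ n₂ * a.1.2.2), h⟩)) = Quot.mk _ (t₁ ⟨((x' : ℂ) ^ n₁ * a.1.2.1,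
          (x' : ℂ) ^ n₂ * a.1.2.2), h⟩) from fun _ => rfl]
        refine (Quot.sound ⟨x', ?_⟩).symm
        show (p * cq ((x' : ℂ) ^ l), ((x' : ℂ) ^ n₁ * a.1.2.1, (x' : ℂ) ^ n₂ * a.1.2.2))
            = ((1 : Quaternion ℝ), ((x' : ℂ) ^ n₁ * a.1.2.1, (x' : ℂ) ^ n₂ * a.1.2.2))
        rw [hx', hpα, ← cq_mul, Complex.mul_conj, Complex.normSq_eq_norm_sq, hα1, one_pow,
          Complex.ofReal_one, cq_one]
    · by_cases hα0 : α = 0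
      · -- p lies on the circle of j's
        have hpβ : p = cq β * qj := by rw [hdec, hα0, cq_zero, zero_add]
        have hβ1 : ‖β‖ = 1 := by
          have : ‖p‖ = ‖β‖ := by
            rw [hpβ, norm_mul, norm_qj, mul_one, norm_cq]
          rw [← this, hpdef, a.2.1]
        obtain ⟨x', hx'⟩ := exists_circle_root l hl β hβ1
        refine ⟨Sum.inr (Quot.mk _ ⟨((x' : ℂ) ^ n₁ * a.1.2.1, (x' : ℂ) ^ n₂ * a.1.2.2), ?_⟩), ?_⟩
        · simp only [map_mul, map_pow, Circle.normSq_coe, one_pow, one_mul]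
          exact a.2.2
        · rw [show ∀ h, Φ l n₁ n₂ hl (Sum.inr (Quot.mk _ ⟨((x' : ℂ) ^ n₁ * a.1.2.1,
            (x' : ℂ) ^ n₂ * a.1.2.2), h⟩)) = Quot.mk _ (tj ⟨((x' : ℂ) ^ n₁ * a.1.2.1,
            (x' : ℂ) ^ n₂ * a.1.2.2), h⟩) from fun _ => rfl]
          refine (Quot.sound ⟨x', ?_⟩).symm
          show (p * cq ((x' : ℂ) ^ l), ((x' : ℂ) ^ n₁ * a.1.2.1, (x' : ℂ) ^ n₂ * a.1.2.2))
              = (qj, ((x' : ℂ) ^ n₁ * a.1.2.1, (x' : ℂ) ^ n₂ * a.1.2.2))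
          rw [hx', hpβ, mul_assoc, qj_mul_cq, ← mul_assoc, ← cq_mul, Complex.mul_conj,
            Complex.normSq_eq_norm_sq, hβ1, one_pow, Complex.ofReal_one, cq_one, one_mul]
      · -- impossible: both components nonzero
        exfalso
        have hcy1 : c * y = 1 := by
          apply mul_left_cancel₀ hα0
          rw [mul_one]
          linear_combination h₁
        have hcy2 : c * starRingEnd ℂ y = 1 := by
          apply mul_left_cancel₀ hβ0
          rw [mul_one]
          linear_combination h₂
        have hc0 : c ≠ 0 := left_ne_zero_of_mul_eq_one hcy1
        have hyy : starRingEnd ℂ y = y := (mul_left_cancel₀ hc0 (hcy1.trans hcy2.symm)).symm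
        have him : y.im = 0 := Complex.conj_eq_iff_im.mp hyy
        have hre : y.re ≠ 0 := by
          intro h0
          have : y = 0 := Complex.ext h0 him
          rw [this, norm_zero] at hyabs
          norm_num at hyabs
        have him2 : (c * y).im = 0 := by rw [hcy1]; rfl
        rw [Complex.mul_im, him, mul_zero, zero_add] at him2
        exact hsin (by
          rcases mul_eq_zero.mp him2 with h | h
          · exact h
          · exact absurd h hre)
  -- assembling the homeomorphism
  have hbij : Function.Bijective (fun v => (⟨Φ l n₁ n₂ hl v, hmem v⟩ :
      ↥{X : NSpace l n₁ n₂ | ∀ g ∈ Subgroup.zpowers ζ, quatAct l n₁ n₂ g X = X})) := by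
    constructor
    · exact fun v w h => injective_Φ l n₁ n₂ hl (congrArg Subtype.val h)
    · rintro ⟨X, hXmem⟩
      induction X using Quot.ind with | _ a =>
      obtain ⟨v, hv⟩ := hsurj a hXmem
      exact ⟨v, Subtype.ext hv⟩
  have hcont : Continuous (Equiv.ofBijective _ hbij) :=
    (continuous_Φ l n₁ n₂ hl).subtype_mk _
  exact ⟨(hcont.homeoOfEquivCompactToT2).symm⟩
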